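/- Let F : C → D be a functor between small categories such that for every object U of D, the comma-type category I_U^F (objects: pairs (V, g) with V in C and g : U → F(V)) has finite products. Then the left Kan extension functor along F (the presheaf inverse image f^p, defined objectwise as the colimit over I_U^F) commutes with finite products of presheaves of sets. -/

import Mathlib

open CategoryTheory CategoryTheory.Limits

universe u

section Aux

variable {K : Type u} [SmallCategory K]

/-- The pointwise pi functor of a finite family of `Type u`-valued functors. -/
@[simps]
def QPi {r : ℕ} (H : Fin r → (K ⥤ Type u)) : K ⥤ Type u where
  obj k := ∀ i, (H i).obj k
  map f := TypeCat.ofHom (fun x i => (H i).map f (x i))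
  map_id k := by ext x; simp
  map_comp f g := by ext x; simp

/-- The canonical cocone on `QPi H` with point `∀ i, colimit (H i)`. -/
@[simps]
noncomputable def phiCocone {r : ℕ} (H : Fin r → (K ⥤ Type u)) : Cocone (QPi H) where
  pt := ∀ i, colimit (H i)
  ι :=
    { app := fun k => TypeCat.ofHom (fun x i => colimit.ι (H i) k (x i))
      naturality := by
        intro k k' f
        ext x
        funext i
        exact Types.Colimit.w_apply f }

variable [HasFiniteCoproducts K]

/-- Auxiliary tuple used in `QPi_single_coord`. -/
noncomputable def tupAux {r : ℕ} (H : Fin r → (K ⥤ Type u)) (m : K) (i₀ : Fin r)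
    (u : ∀ i, (H i).obj m) (n : K) (c : (H i₀).obj n) : (QPi H).obj (m ⨿ n) :=
  Function.update (fun i => (H i).map coprod.inl (u i)) i₀ ((H i₀).map coprod.inr c)

theorem tupAux_self {r : ℕ} (H : Fin r → (K ⥤ Type u)) (m : K) (i₀ : Fin r)
    (u : ∀ i, (H i).obj m) (c : (H i₀).obj m) :
    colimit.ι (QPi H) (m ⨿ m) (tupAux H m i₀ u m c)
      = colimit.ι (QPi H) m (Function.update u i₀ c) := by
  have h : (QPi H).map (coprod.desc (𝟙 m) (𝟙 m)) (tupAux H m i₀ u m c)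
      = Function.update u i₀ c := by
    funext i
    change (H i).map _ (tupAux H m i₀ u m c i) = _
    rcases eq_or_ne i i₀ with rfl | hne
    · simp only [QPi_map, TypeCat.ofHom_apply, tupAux, Function.update_self,
        ← FunctorToTypes.map_comp_apply, coprod.inr_desc, FunctorToTypes.map_id_apply]
    · simp only [QPi_map, TypeCat.ofHom_apply, tupAux, Function.update_of_ne hne,
        ← FunctorToTypes.map_comp_apply, coprod.inl_desc, FunctorToTypes.map_id_apply]
  rw [← h]
  exact (Types.Colimit.w_apply (coprod.desc (𝟙 m) (𝟙 m))).symm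

theorem tupAux_step {r : ℕ} (H : Fin r → (K ⥤ Type u)) (m : K) (i₀ : Fin r)
    (u : ∀ i, (H i).obj m) {n n' : K} (f : n ⟶ n') (c : (H i₀).obj n) :
    colimit.ι (QPi H) (m ⨿ n) (tupAux H m i₀ u n c)
      = colimit.ι (QPi H) (m ⨿ n') (tupAux H m i₀ u n' ((H i₀).map f c)) := by
  have h : (QPi H).map (coprod.map (𝟙 m) f) (tupAux H m i₀ u n c)
      = tupAux H m i₀ u n' ((H i₀).map f c) := by
    funext i
    change (H i).map _ (tupAux H m i₀ u n c i) = _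
    rcases eq_or_ne i i₀ with rfl | hne
    · simp only [QPi_map, TypeCat.ofHom_apply, tupAux, Function.update_self,
        ← FunctorToTypes.map_comp_apply, coprod.inr_map]
    · simp only [QPi_map, TypeCat.ofHom_apply, tupAux, Function.update_of_ne hne,
        ← FunctorToTypes.map_comp_apply, coprod.inl_map, Category.id_comp,
        Category.comp_id]
  rw [← h]
  exact (Types.Colimit.w_apply (coprod.map (𝟙 m) f)).symm

/-- Replacing one coordinate by another one representing the same element of the
colimit does not change the class in the colimit of the pointwise product. -/
theorem QPi_single_coord {r : ℕ} (H : Fin r → (K ⥤ Type u)) (m : K) (i₀ : Fin r)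
    (u : ∀ i, (H i).obj m) (a b : (H i₀).obj m)
    (hab : colimit.ι (H i₀) m a = colimit.ι (H i₀) m b) :
    colimit.ι (QPi H) m (Function.update u i₀ a)
      = colimit.ι (QPi H) m (Function.update u i₀ b) := by
  have hgen := Types.colimit_eq hab
  have hquot : Quot.mk ((H i₀).ColimitTypeRel) ⟨m, a⟩
      = Quot.mk ((H i₀).ColimitTypeRel) ⟨m, b⟩ := Quot.eqvGen_sound hgen
  have hstep : ∀ p p' : Σ n, (H i₀).obj n, (H i₀).ColimitTypeRel p p' →
      colimit.ι (QPi H) (m ⨿ p.1) (tupAux H m i₀ u p.1 p.2)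
        = colimit.ι (QPi H) (m ⨿ p'.1) (tupAux H m i₀ u p'.1 p'.2) := by
    rintro ⟨n, c⟩ ⟨n', c'⟩ ⟨f, hf⟩
    dsimp at hf
    rw [hf]
    exact tupAux_step H m i₀ u f c
  have hT : colimit.ι (QPi H) (m ⨿ m) (tupAux H m i₀ u m a)
      = colimit.ι (QPi H) (m ⨿ m) (tupAux H m i₀ u m b) :=
    congrArg (Quot.lift
      (fun p : Σ n, (H i₀).obj n =>
        colimit.ι (QPi H) (m ⨿ p.1) (tupAux H m i₀ u p.1 p.2)) hstep) hquot
  rw [← tupAux_self H m i₀ u a, ← tupAux_self H m i₀ u b, hT]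

/-- If all coordinates of two tuples agree in the respective colimits, then
the tuples agree in the colimit of the pointwise product. -/
theorem QPi_all_coord {r : ℕ} (H : Fin r → (K ⥤ Type u)) (m : K)
    (x y : ∀ i, (H i).obj m)
    (h : ∀ i, colimit.ι (H i) m (x i) = colimit.ι (H i) m (y i)) :
    colimit.ι (QPi H) m x = colimit.ι (QPi H) m y := by
  suffices h' : ∀ s : Finset (Fin r),
      colimit.ι (QPi H) m x
        = colimit.ι (QPi H) m (fun i => if i ∈ s then y i else x i) by
    have := h' Finset.univ
    simpa using this
  intro s
  induction s using Finset.induction with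
  | empty => simp
  | @insert j s hj ih =>
      have e1 : (fun i => if i ∈ insert j s then y i else x i)
          = Function.update (fun i => if i ∈ s then y i else x i) j (y j) := by
        funext i
        rcases eq_or_ne i j with rfl | hne
        · simp
        · simp [Function.update_of_ne hne, Finset.mem_insert, hne]
      have e2 : (fun i => if i ∈ s then y i else x i)
          = Function.update (fun i => if i ∈ s then y i else x i) j (x j) := by
        funext i
        rcases eq_or_ne i j with rfl | hne
        · simp [hj]
        · simp [Function.update_of_ne hne]
      rw [ih, e2, e1]
      exact QPi_single_coord H m j _ (x j) (y j) (h j)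

/-- The canonical map from the colimit of the pointwise product to the product of
the colimits is bijective when the index category has finite coproducts. -/
theorem phi_bijective {r : ℕ} (H : Fin r → (K ⥤ Type u)) :
    Function.Bijective (colimit.desc (QPi H) (phiCocone H)) := by
  constructor
  · intro z z' hzz
    obtain ⟨k, x, rfl⟩ := Types.jointly_surjective' z
    obtain ⟨k', x', rfl⟩ := Types.jointly_surjective' z'
    rw [Types.Colimit.ι_desc_apply, Types.Colimit.ι_desc_apply] at hzz
    have hc : ∀ i, colimit.ι (H i) k (x i) = colimit.ι (H i) k' (x' i) := by
      intro i
      exact congrFun hzz i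
    calc colimit.ι (QPi H) k x
        = colimit.ι (QPi H) (k ⨿ k') ((QPi H).map coprod.inl x) :=
          (Types.Colimit.w_apply coprod.inl).symm
      _ = colimit.ι (QPi H) (k ⨿ k') ((QPi H).map coprod.inr x') := by
          apply QPi_all_coord
          intro i
          show colimit.ι (H i) _ ((H i).map coprod.inl (x i))
            = colimit.ι (H i) _ ((H i).map coprod.inr (x' i))
          rw [Types.Colimit.w_apply, Types.Colimit.w_apply]
          exact hc i
      _ = colimit.ι (QPi H) k' x' := Types.Colimit.w_apply coprod.inr
  · intro f
    choose k x hx using fun i => Types.jointly_surjective' (f i)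
    refine ⟨colimit.ι (QPi H) (∐ k) (fun i => (H i).map (Sigma.ι k i) (x i)), (Types.Colimit.ι_desc_apply _ _ _ _).trans ?_⟩
    funext i
    show colimit.ι (H i) _ ((H i).map (Sigma.ι k i) (x i)) = f i
    rw [Types.Colimit.w_apply]
    exact hx i

end Aux

/-- Let `F : C → D` be a functor between small categories such
that for every object `U` of `D` the comma-type category `I_U^F` (objects:
pairs `(V, g)` with `V ∈ C` and `g : U → F(V)`, i.e. `StructuredArrow U F`) has
finite products.  Then the presheaf inverse image (left Kan extension along
`F`), computed objectwise as the colimit over `I_U^F`, commutes with finite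
products of presheaves of sets: the canonical map
`f^p(G₁ × ⋯ × Gᵣ)(U) → (f^p G₁ × ⋯ × f^p Gᵣ)(U)` is an isomorphism. -/
theorem presheaf_inverse_image_commutes_with_finite_products
    {C D : Type u} [SmallCategory C] [SmallCategory D] (F : C ⥤ D)
    (hprod : ∀ U : D, HasFiniteProducts (StructuredArrow U F))
    (r : ℕ) (G : Fin r → (Cᵒᵖ ⥤ Type u)) (U : D) :
    IsIso (Pi.lift (fun i =>
        colim.map (Functor.whiskerLeft (StructuredArrow.proj U F).op (Pi.π G i))) :
      colim.obj ((StructuredArrow.proj U F).op ⋙ ∏ᶜ G)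
        ⟶ ∏ᶜ fun i => colim.obj ((StructuredArrow.proj U F).op ⋙ G i)) := by
  haveI := hprod U
  haveI : HasFiniteCoproducts (StructuredArrow U F)ᵒᵖ := inferInstance
  set W : (StructuredArrow U F)ᵒᵖ ⥤ Cᵒᵖ := (StructuredArrow.proj U F).op with hW
  set H : Fin r → ((StructuredArrow U F)ᵒᵖ ⥤ Type u) := fun i => W ⋙ G i with hH
  -- the comparison natural transformation from the whiskered product to the
  -- pointwise product
  let cQ : W ⋙ ∏ᶜ G ⟶ QPi H :=
    { app := fun k => TypeCat.ofHom (fun z i => (Pi.π G i).app (W.obj k) z)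
      naturality := by
        intro k k' f
        ext z
        funext i
        exact ConcreteCategory.congr_hom ((Pi.π G i).naturality (W.map f)) z }
  -- each component of `cQ` is an isomorphism
  haveI : ∀ k, IsIso (cQ.app k) := by
    intro k
    have heq : cQ.app k
        = piComparison ((evaluation Cᵒᵖ (Type u)).obj (W.obj k)) G ≫
            (Types.productIso.{0, u} (fun i => (G i).obj (W.obj k))).hom := by
      ext z
      funext i
      exact (ConcreteCategory.congr_hom (piComparison_comp_π
        ((evaluation Cᵒᵖ (Type u)).obj (W.obj k)) G i) z).symm
    rw [heq]
    have : IsIso (piComparison ((evaluation Cᵒᵖ (Type u)).obj (W.obj k)) G) := inferInstance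
    exact IsIso.comp_isIso' this (Iso.isIso_hom _)
  haveI : IsIso cQ := NatIso.isIso_of_isIso_app cQ
  -- relate the canonical map with the concrete bijection
  have hbij := phi_bijective H
  haveI : IsIso (colimit.desc (QPi H) (phiCocone H)) :=
    (isIso_iff_bijective _).2 hbij
  have key : (Pi.lift (fun i => colim.map (Functor.whiskerLeft W (Pi.π G i))) :
        colim.obj (W ⋙ ∏ᶜ G) ⟶ ∏ᶜ fun i => colim.obj (H i))
      = colim.map cQ ≫ colimit.desc (QPi H) (phiCocone H) ≫
          (Types.productIso.{0, u} (fun i => colim.obj (H i))).inv := by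
    apply Pi.hom_ext
    intro i
    rw [limit.lift_π, Fan.mk_π_app]
    apply colimit.hom_ext
    intro k
    ext z
    show colim.map (Functor.whiskerLeft W (Pi.π G i)) (colimit.ι (W ⋙ ∏ᶜ G) k z)
      = Pi.π (fun i => colim.obj (H i)) i ((Types.productIso.{0, u} (fun i => colim.obj (H i))).inv
        (colimit.desc (QPi H) (phiCocone H) (colim.map cQ (colimit.ι (W ⋙ ∏ᶜ G) k z))))
    refine Eq.trans ?_ (Types.productIso_inv_comp_π_apply.{0, u} (fun i => colim.obj (H i)) i
      (colimit.desc (QPi H) (phiCocone H) (colim.map cQ (colimit.ι (W ⋙ ∏ᶜ G) k z)))).symm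
    show colim.map (Functor.whiskerLeft W (Pi.π G i)) (colimit.ι (W ⋙ ∏ᶜ G) k z)
      = colimit.desc (QPi H) (phiCocone H) (colim.map cQ (colimit.ι (W ⋙ ∏ᶜ G) k z)) i
    rw [Types.Colimit.ι_map_apply, Types.Colimit.ι_map_apply,
      Types.Colimit.ι_desc_apply]
    rfl
  rw [key]
  exact IsIso.comp_isIso' inferInstance (IsIso.comp_isIso' inferInstance (Iso.isIso_inv _))
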